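/- Let n ≥ 1 and let p : Fin n → MvPolynomial (Fin n) ℝ be a polynomial vector field such that for each i there are polynomials r_i, s_i all of whose coefficients are nonnegative with p_i = r_i − X_i·s_i. Then there exist m ≥ n, an injection ι : Fin n → Fin m, a polynomial vector field P : Fin m → MvPolynomial (Fin m) ℝ, and a polynomial map φ : ℝ^n → ℝ^m with φ(y)_{ι(i)} = y_i for all y and i, such that: (1) for each k there are polynomials R_k, S_k all of whose coefficients are nonnegative with P_k = R_k − X_k·S_k; (2) each P_k has total degree at most 2; and (3) for every differentiable x : ℝ → ℝ^n satisfying x′(t) = p(x(t)) for all t, the function v(t) = φ(x(t)) satisfies v′(t) = P(v(t)) for all t. -/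

import Mathlib

open MvPolynomial

namespace Stmt8

/-! ### Nonnegative-coefficient closure lemmas -/

lemma coeff_mul_nonneg {σ : Type*} {p q : MvPolynomial σ ℝ}
    (hp : ∀ d, 0 ≤ p.coeff d) (hq : ∀ d, 0 ≤ q.coeff d) :
    ∀ d, 0 ≤ (p * q).coeff d := by
  classical
  intro d
  rw [coeff_mul]
  exact Finset.sum_nonneg fun x _ => mul_nonneg (hp _) (hq _)

lemma coeff_sum_nonneg {σ ι : Type*} (s : Finset ι) (f : ι → MvPolynomial σ ℝ)
    (h : ∀ i ∈ s, ∀ d, 0 ≤ (f i).coeff d) :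
    ∀ d, 0 ≤ (∑ i ∈ s, f i).coeff d := by
  intro d
  rw [coeff_sum]
  exact Finset.sum_nonneg fun i hi => h i hi d

lemma coeff_C_nonneg {σ : Type*} {c : ℝ} (hc : 0 ≤ c) :
    ∀ d, 0 ≤ (C c : MvPolynomial σ ℝ).coeff d := by
  classical
  intro d
  rw [coeff_C]
  split <;> simp [hc]

lemma coeff_monomial_one_nonneg {σ : Type*} (e : σ →₀ ℕ) :
    ∀ d, 0 ≤ (monomial e (1 : ℝ)).coeff d := by
  classical
  intro d
  rw [coeff_monomial]
  split <;> norm_num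

lemma coeff_X_nonneg {σ : Type*} [DecidableEq σ] (i : σ) :
    ∀ d, 0 ≤ (X i : MvPolynomial σ ℝ).coeff d := by
  intro d
  rw [coeff_X']
  split <;> norm_num

/-! ### Splitting a multi-index -/

lemma exists_le_sum_eq {n : ℕ} (β : Fin n → ℕ) (t : ℕ) (ht : t ≤ ∑ i, β i) :
    ∃ γ : Fin n → ℕ, (∀ i, γ i ≤ β i) ∧ ∑ i, γ i = t := by
  induction t with
  | zero => exact ⟨fun _ => 0, fun i => Nat.zero_le _, by simp⟩
  | succ t ih =>
    obtain ⟨γ, hγ, hsum⟩ := ih (Nat.le_of_succ_le ht)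
    have hlt : ∑ i, γ i < ∑ i, β i := by omega
    have : ∃ i, γ i < β i := by
      by_contra h
      push_neg at h
      exact absurd (Finset.sum_le_sum fun i _ => h i) (not_le.mpr hlt)
    obtain ⟨i, hi⟩ := this
    refine ⟨Function.update γ i (γ i + 1), ?_, ?_⟩
    · intro j
      rcases eq_or_ne j i with rfl | hj
      · simpa using hi
      · simp [Function.update_of_ne hj, hγ j]
    · rw [Finset.sum_update_of_mem (Finset.mem_univ i)]
      rw [Finset.sum_eq_add_sum_sdiff_singleton_of_mem (Finset.mem_univ i) γ] at hsum
      omega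

/-! ### The index type -/

def Idx (n D : ℕ) : Type :=
  {f : Fin n → Fin (D + 1) // 1 ≤ ∑ i, (f i : ℕ) ∧ ∑ i, (f i : ℕ) ≤ D}

instance (n D : ℕ) : Fintype (Idx n D) := by unfold Idx; infer_instance
instance (n D : ℕ) : DecidableEq (Idx n D) := by unfold Idx; infer_instance

noncomputable def eqv (n D : ℕ) : Idx n D ≃ Fin (Fintype.card (Idx n D)) :=
  Fintype.equivFin _

def mkIdx {n D : ℕ} (β : Fin n → ℕ) (h1 : 1 ≤ ∑ i, β i) (h2 : ∑ i, β i ≤ D) :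
    Idx n D :=
  ⟨fun i => ⟨β i, Nat.lt_succ_of_le (le_trans (Finset.single_le_sum (fun j _ => Nat.zero_le (β j)) (Finset.mem_univ i)) h2)⟩,
    by simpa using ⟨h1, h2⟩⟩

def idxFun {n D : ℕ} (a : Idx n D) : Fin n → ℕ := fun i => (a.1 i : ℕ)

@[simp] lemma idxFun_mkIdx {n D : ℕ} (β : Fin n → ℕ) (h1 : 1 ≤ ∑ i, β i)
    (h2 : ∑ i, β i ≤ D) : idxFun (mkIdx β h1 h2) = β := rfl

lemma idxFun_sum_le {n D : ℕ} (a : Idx n D) : ∑ i, idxFun a i ≤ D := a.2.2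

lemma mkIdx_injective {n D : ℕ} {β β' : Fin n → ℕ} {h1 h2 h1' h2'}
    (h : (mkIdx β h1 h2 : Idx n D) = mkIdx β' h1' h2') : β = β' := by
  have := congrArg idxFun h
  simpa using this

/-! ### Monomials -/

noncomputable def mon {n : ℕ} (β : Fin n → ℕ) : MvPolynomial (Fin n) ℝ :=
  monomial (Finsupp.equivFunOnFinite.symm β) 1

@[simp] lemma eval_mon {n : ℕ} (y : Fin n → ℝ) (β : Fin n → ℕ) :
    eval y (mon β) = ∏ i, y i ^ β i := by
  rw [mon, eval_monomial, one_mul, Finsupp.prod_fintype]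
  · simp
  · intro i; rfl

lemma totalDegree_mon_le {n : ℕ} (β : Fin n → ℕ) :
    (mon β).totalDegree ≤ ∑ i, β i := by
  refine le_trans (totalDegree_monomial_le _ _) ?_
  rw [Finsupp.sum_fintype]
  · simp
  · intro; rfl

lemma coeff_mon_nonneg {n : ℕ} (β : Fin n → ℕ) :
    ∀ d, 0 ≤ (mon β).coeff d := coeff_monomial_one_nonneg _

end Stmt8

namespace Stmt8

section Lift

variable (n D : ℕ)

/-- Abbreviation for the number of new variables. -/
noncomputable abbrev M (n D : ℕ) : ℕ := Fintype.card (Idx n D)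

noncomputable def split {n : ℕ} (β : Fin n → ℕ) (t : ℕ) (h : t ≤ ∑ i, β i) : Fin n → ℕ :=
  (exists_le_sum_eq β t h).choose

lemma split_le {n : ℕ} (β : Fin n → ℕ) (t : ℕ) (h : t ≤ ∑ i, β i) (i : Fin n) :
    split β t h i ≤ β i := (exists_le_sum_eq β t h).choose_spec.1 i

lemma split_sum {n : ℕ} (β : Fin n → ℕ) (t : ℕ) (h : t ≤ ∑ i, β i) :
    ∑ i, split β t h i = t := (exists_le_sum_eq β t h).choose_spec.2

lemma sum_sub_split {n : ℕ} (β : Fin n → ℕ) (t : ℕ) (h : t ≤ ∑ i, β i) :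
    ∑ i, (β i - split β t h i) = ∑ i, β i - t := by
  rw [Finset.sum_tsub_distrib Finset.univ (fun i _ => split_le β t h i), split_sum]

/-- Lift of a monomial of degree ≤ 2D to a polynomial of degree ≤ 2 in the new
variables. -/
noncomputable def liftMon (hD : 1 ≤ D) (β : Fin n → ℕ) (h : ∑ i, β i ≤ 2 * D) :
    MvPolynomial (Fin (M n D)) ℝ :=
  if h0 : ∑ i, β i = 0 then 1
  else if h1 : ∑ i, β i ≤ D then X (eqv n D (mkIdx β (by omega) h1))
  else
    X (eqv n D (mkIdx (split β D (by omega)) (by rw [split_sum]; omega) (by rw [split_sum]))) *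
    X (eqv n D (mkIdx (fun i => β i - split β D (by omega) i)
        (by rw [sum_sub_split]; omega) (by rw [sum_sub_split]; omega)))

lemma coeff_liftMon_nonneg (hD : 1 ≤ D) (β : Fin n → ℕ) (h : ∑ i, β i ≤ 2 * D) :
    ∀ d, 0 ≤ (liftMon n D hD β h).coeff d := by
  unfold liftMon
  split
  · intro d
    have : (1 : MvPolynomial (Fin (M n D)) ℝ) = monomial 0 1 := by simp
    rw [this]
    exact coeff_monomial_one_nonneg 0 d
  split
  · exact coeff_X_nonneg _
  · exact coeff_mul_nonneg (coeff_X_nonneg _) (coeff_X_nonneg _)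

lemma totalDegree_liftMon_le (hD : 1 ≤ D) (β : Fin n → ℕ) (h : ∑ i, β i ≤ 2 * D) :
    (liftMon n D hD β h).totalDegree ≤ 2 := by
  unfold liftMon
  split
  · simp
  split
  · rw [totalDegree_X]; omega
  · refine le_trans (totalDegree_mul _ _) ?_
    rw [totalDegree_X, totalDegree_X]

lemma eval_liftMon (hD : 1 ≤ D) (β : Fin n → ℕ) (h : ∑ i, β i ≤ 2 * D)
    (y : Fin n → ℝ) :
    eval (fun k => ∏ i, y i ^ idxFun ((eqv n D).symm k) i) (liftMon n D hD β h)
      = ∏ i, y i ^ β i := by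
  unfold liftMon
  split
  · rename_i h0
    have : ∀ i, β i = 0 := by
      intro i
      have := Finset.sum_eq_zero_iff.mp h0
      exact this i (Finset.mem_univ i)
    simp [this]
  split
  · rw [eval_X]
    simp
  · rw [eval_mul, eval_X, eval_X]
    simp only [Equiv.symm_apply_apply, idxFun_mkIdx]
    rw [← Finset.prod_mul_distrib]
    refine Finset.prod_congr rfl fun i _ => ?_
    rw [← pow_add]
    congr 1
    have := split_le β D (by omega) i
    omega

/-- Lift of a polynomial of total degree ≤ 2D. -/
noncomputable def liftPoly (hD : 1 ≤ D) (q : MvPolynomial (Fin n) ℝ)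
    (hq : q.totalDegree ≤ 2 * D) : MvPolynomial (Fin (M n D)) ℝ :=
  ∑ d ∈ q.support.attach,
    (q.coeff d.1) • liftMon n D hD (fun i => d.1 i)
      (by
        show ∑ i, d.1 i ≤ 2 * D
        have h1 : (d.1.sum fun _ e => e) ≤ q.totalDegree := le_totalDegree d.2
        have h2 : (d.1.sum fun _ e => e) = ∑ i, d.1 i := by
          rw [Finsupp.sum_fintype]; intro; rfl
        omega)

lemma coeff_liftPoly_nonneg (hD : 1 ≤ D) (q : MvPolynomial (Fin n) ℝ)
    (hq : q.totalDegree ≤ 2 * D) (hcoef : ∀ d, 0 ≤ q.coeff d) :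
    ∀ d, 0 ≤ (liftPoly n D hD q hq).coeff d := by
  intro d
  unfold liftPoly
  rw [coeff_sum]
  refine Finset.sum_nonneg fun e _ => ?_
  rw [coeff_smul]
  exact mul_nonneg (hcoef _) (coeff_liftMon_nonneg _ _ _ _ _ _)

lemma totalDegree_liftPoly_le (hD : 1 ≤ D) (q : MvPolynomial (Fin n) ℝ)
    (hq : q.totalDegree ≤ 2 * D) :
    (liftPoly n D hD q hq).totalDegree ≤ 2 := by
  unfold liftPoly
  refine le_trans (totalDegree_finset_sum _ _) ?_
  refine Finset.sup_le fun e _ => ?_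
  exact le_trans (totalDegree_smul_le _ _) (totalDegree_liftMon_le _ _ _ _ _)

lemma eval_liftPoly (hD : 1 ≤ D) (q : MvPolynomial (Fin n) ℝ)
    (hq : q.totalDegree ≤ 2 * D) (y : Fin n → ℝ) :
    eval (fun k => ∏ i, y i ^ idxFun ((eqv n D).symm k) i) (liftPoly n D hD q hq)
      = eval y q := by
  unfold liftPoly
  rw [map_sum]
  rw [eval_eq' y q, ← Finset.sum_attach q.support (fun d => q.coeff d * ∏ i, y i ^ d i)]
  refine Finset.sum_congr rfl fun e _ => ?_
  rw [smul_eval, eval_liftMon]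

end Lift

end Stmt8

namespace Stmt8

section Lift1

variable (n D : ℕ)

noncomputable def liftMon1 (β : Fin n → ℕ) (h : ∑ i, β i ≤ D) :
    MvPolynomial (Fin (M n D)) ℝ :=
  if h0 : ∑ i, β i = 0 then 1
  else X (eqv n D (mkIdx β (by omega) h))

lemma coeff_liftMon1_nonneg (β : Fin n → ℕ) (h : ∑ i, β i ≤ D) :
    ∀ d, 0 ≤ (liftMon1 n D β h).coeff d := by
  unfold liftMon1
  split
  · intro d
    have : (1 : MvPolynomial (Fin (M n D)) ℝ) = monomial 0 1 := by simp
    rw [this]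
    exact coeff_monomial_one_nonneg 0 d
  · exact coeff_X_nonneg _

lemma totalDegree_liftMon1_le (β : Fin n → ℕ) (h : ∑ i, β i ≤ D) :
    (liftMon1 n D β h).totalDegree ≤ 1 := by
  unfold liftMon1
  split
  · simp
  · rw [totalDegree_X]

lemma eval_liftMon1 (β : Fin n → ℕ) (h : ∑ i, β i ≤ D) (y : Fin n → ℝ) :
    eval (fun k => ∏ i, y i ^ idxFun ((eqv n D).symm k) i) (liftMon1 n D β h)
      = ∏ i, y i ^ β i := by
  unfold liftMon1
  split
  · rename_i h0
    have : ∀ i, β i = 0 := fun i =>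
      Finset.sum_eq_zero_iff.mp h0 i (Finset.mem_univ i)
    simp [this]
  · rw [eval_X]
    simp

noncomputable def liftPoly1 (q : MvPolynomial (Fin n) ℝ)
    (hq : q.totalDegree ≤ D) : MvPolynomial (Fin (M n D)) ℝ :=
  ∑ d ∈ q.support.attach,
    (q.coeff d.1) • liftMon1 n D (fun i => d.1 i)
      (by
        show ∑ i, d.1 i ≤ D
        have h1 : (d.1.sum fun _ e => e) ≤ q.totalDegree := le_totalDegree d.2
        have h2 : (d.1.sum fun _ e => e) = ∑ i, d.1 i := by
          rw [Finsupp.sum_fintype]; intro; rfl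
        omega)

lemma coeff_liftPoly1_nonneg (q : MvPolynomial (Fin n) ℝ)
    (hq : q.totalDegree ≤ D) (hcoef : ∀ d, 0 ≤ q.coeff d) :
    ∀ d, 0 ≤ (liftPoly1 n D q hq).coeff d := by
  intro d
  unfold liftPoly1
  rw [coeff_sum]
  refine Finset.sum_nonneg fun e _ => ?_
  rw [coeff_smul]
  exact mul_nonneg (hcoef _) (coeff_liftMon1_nonneg _ _ _ _ _)

lemma totalDegree_liftPoly1_le (q : MvPolynomial (Fin n) ℝ)
    (hq : q.totalDegree ≤ D) :
    (liftPoly1 n D q hq).totalDegree ≤ 1 := by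
  unfold liftPoly1
  refine le_trans (totalDegree_finset_sum _ _) ?_
  refine Finset.sup_le fun e _ => ?_
  exact le_trans (totalDegree_smul_le _ _) (totalDegree_liftMon1_le _ _ _ _)

lemma eval_liftPoly1 (q : MvPolynomial (Fin n) ℝ)
    (hq : q.totalDegree ≤ D) (y : Fin n → ℝ) :
    eval (fun k => ∏ i, y i ^ idxFun ((eqv n D).symm k) i) (liftPoly1 n D q hq)
      = eval y q := by
  unfold liftPoly1
  rw [map_sum]
  rw [eval_eq' y q, ← Finset.sum_attach q.support (fun d => q.coeff d * ∏ i, y i ^ d i)]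
  refine Finset.sum_congr rfl fun e _ => ?_
  rw [smul_eval, eval_liftMon1]

end Lift1

end Stmt8

namespace Stmt8

section Main

variable (n D : ℕ)

noncomputable def alpha (k : Fin (M n D)) : Fin n → ℕ := idxFun ((eqv n D).symm k)

lemma alpha_sum_le (k : Fin (M n D)) : ∑ i, alpha n D k i ≤ D := ((eqv n D).symm k).2.2

def mu (α : Fin n → ℕ) (i : Fin n) : Fin n → ℕ :=
  fun j => if j = i then α i - 1 else α j

lemma mu_sum_le (α : Fin n → ℕ) (i : Fin n) : ∑ j, mu n α i j ≤ ∑ j, α j := by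
  refine Finset.sum_le_sum fun j _ => ?_
  unfold mu
  split
  · rename_i h; subst h; omega
  · exact le_refl _

noncomputable def qR (r : Fin n → MvPolynomial (Fin n) ℝ) (k : Fin (M n D)) :
    MvPolynomial (Fin n) ℝ :=
  ∑ i, C ((alpha n D k i : ℕ) : ℝ) * mon (mu n (alpha n D k) i) * r i

noncomputable def qS (s : Fin n → MvPolynomial (Fin n) ℝ) (k : Fin (M n D)) :
    MvPolynomial (Fin n) ℝ :=
  ∑ i, C ((alpha n D k i : ℕ) : ℝ) * s i

lemma totalDegree_qR_le (r : Fin n → MvPolynomial (Fin n) ℝ)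
    (hrD : ∀ i, (r i).totalDegree ≤ D) (k : Fin (M n D)) :
    (qR n D r k).totalDegree ≤ 2 * D := by
  unfold qR
  refine le_trans (totalDegree_finset_sum _ _) (Finset.sup_le fun i _ => ?_)
  have h1 := totalDegree_mul (C ((alpha n D k i : ℕ) : ℝ) * mon (mu n (alpha n D k) i)) (r i)
  have h2 := totalDegree_mul (C ((alpha n D k i : ℕ) : ℝ)) (mon (mu n (alpha n D k) i))
  have h3 : (C ((alpha n D k i : ℕ) : ℝ) : MvPolynomial (Fin n) ℝ).totalDegree = 0 :=
    totalDegree_C _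
  have h4 := totalDegree_mon_le (mu n (alpha n D k) i)
  have h5 := mu_sum_le n (alpha n D k) i
  have h6 := alpha_sum_le n D k
  have h7 := hrD i
  omega

lemma totalDegree_qS_le (s : Fin n → MvPolynomial (Fin n) ℝ)
    (hsD : ∀ i, (s i).totalDegree ≤ D) (k : Fin (M n D)) :
    (qS n D s k).totalDegree ≤ D := by
  unfold qS
  refine le_trans (totalDegree_finset_sum _ _) (Finset.sup_le fun i _ => ?_)
  have h1 := totalDegree_mul (C ((alpha n D k i : ℕ) : ℝ)) (s i)
  have h3 : (C ((alpha n D k i : ℕ) : ℝ) : MvPolynomial (Fin n) ℝ).totalDegree = 0 :=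
    totalDegree_C _
  have h7 := hsD i
  omega

lemma coeff_qR_nonneg (r : Fin n → MvPolynomial (Fin n) ℝ)
    (hr : ∀ i, ∀ d, 0 ≤ (r i).coeff d) (k : Fin (M n D)) :
    ∀ d, 0 ≤ (qR n D r k).coeff d := by
  unfold qR
  refine coeff_sum_nonneg _ _ fun i _ => ?_
  exact coeff_mul_nonneg
    (coeff_mul_nonneg (coeff_C_nonneg (by positivity)) (coeff_mon_nonneg _)) (hr i)

lemma coeff_qS_nonneg (s : Fin n → MvPolynomial (Fin n) ℝ)
    (hs : ∀ i, ∀ d, 0 ≤ (s i).coeff d) (k : Fin (M n D)) :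
    ∀ d, 0 ≤ (qS n D s k).coeff d := by
  unfold qS
  refine coeff_sum_nonneg _ _ fun i _ => ?_
  exact coeff_mul_nonneg (coeff_C_nonneg (by positivity)) (hs i)

noncomputable def Pk (hD : 1 ≤ D) (r s : Fin n → MvPolynomial (Fin n) ℝ)
    (hrD : ∀ i, (r i).totalDegree ≤ D) (hsD : ∀ i, (s i).totalDegree ≤ D)
    (k : Fin (M n D)) : MvPolynomial (Fin (M n D)) ℝ :=
  liftPoly n D hD (qR n D r k) (totalDegree_qR_le n D r hrD k) -
    X k * liftPoly1 n D (qS n D s k) (totalDegree_qS_le n D s hsD k)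

lemma totalDegree_Pk_le (hD : 1 ≤ D) (r s : Fin n → MvPolynomial (Fin n) ℝ)
    (hrD : ∀ i, (r i).totalDegree ≤ D) (hsD : ∀ i, (s i).totalDegree ≤ D)
    (k : Fin (M n D)) : (Pk n D hD r s hrD hsD k).totalDegree ≤ 2 := by
  unfold Pk
  refine le_trans (totalDegree_sub _ _) (max_le ?_ ?_)
  · exact totalDegree_liftPoly_le _ _ _ _ _
  · refine le_trans (totalDegree_mul _ _) ?_
    have h1 : (X k : MvPolynomial (Fin (M n D)) ℝ).totalDegree = 1 := totalDegree_X k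
    have h2 := totalDegree_liftPoly1_le n D (qS n D s k) (totalDegree_qS_le n D s hsD k)
    omega

lemma eval_Pk (hD : 1 ≤ D) (p r s : Fin n → MvPolynomial (Fin n) ℝ)
    (hrD : ∀ i, (r i).totalDegree ≤ D) (hsD : ∀ i, (s i).totalDegree ≤ D)
    (hps : ∀ i, p i = r i - X i * s i)
    (k : Fin (M n D)) (y : Fin n → ℝ) :
    eval (fun j => ∏ i, y i ^ alpha n D j i) (Pk n D hD r s hrD hsD k)
      = ∑ i, (∏ j ∈ Finset.univ.erase i, y j ^ alpha n D k j) *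
          ((alpha n D k i : ℝ) * y i ^ (alpha n D k i - 1) * eval y (p i)) := by
  unfold Pk
  rw [map_sub, eval_mul, eval_X]
  rw [show eval (fun j => ∏ i, y i ^ alpha n D j i)
        (liftPoly n D hD (qR n D r k) (totalDegree_qR_le n D r hrD k)) = eval y (qR n D r k)
      from eval_liftPoly n D hD (qR n D r k) (totalDegree_qR_le n D r hrD k) y]
  rw [show eval (fun j => ∏ i, y i ^ alpha n D j i)
        (liftPoly1 n D (qS n D s k) (totalDegree_qS_le n D s hsD k)) = eval y (qS n D s k)
      from eval_liftPoly1 n D (qS n D s k) (totalDegree_qS_le n D s hsD k) y]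
  unfold qR qS
  rw [map_sum, map_sum]
  simp only [eval_mul, eval_C, eval_mon]
  rw [Finset.mul_sum, ← Finset.sum_sub_distrib]
  refine Finset.sum_congr rfl fun i _ => ?_
  rw [hps i, map_sub, eval_mul, eval_X]
  rcases Nat.eq_zero_or_pos (alpha n D k i) with h0 | hpos
  · simp [h0]
  · have hsplit : ∏ j, y j ^ alpha n D k j
        = (∏ j ∈ Finset.univ.erase i, y j ^ alpha n D k j) * y i ^ alpha n D k i :=
      (Finset.prod_erase_mul Finset.univ _ (Finset.mem_univ i)).symm
    have hμprod : ∏ j, y j ^ mu n (alpha n D k) i j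
        = (∏ j ∈ Finset.univ.erase i, y j ^ alpha n D k j) * y i ^ (alpha n D k i - 1) := by
      rw [← Finset.prod_erase_mul Finset.univ _ (Finset.mem_univ i)]
      congr 1
      · refine Finset.prod_congr rfl fun j hj => ?_
        unfold mu
        rw [if_neg (Finset.mem_erase.mp hj).1]
      · unfold mu
        rw [if_pos rfl]
    have hpow : y i ^ (alpha n D k i - 1) * y i = y i ^ alpha n D k i := by
      rw [← pow_succ]
      congr 1
      omega
    rw [hμprod, hsplit, ← hpow]
    ring

end Main

end Stmt8

namespace Stmt8

def unitv (n : ℕ) (i : Fin n) : Fin n → ℕ := fun j => if j = i then 1 else 0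

lemma sum_unitv (n : ℕ) (i : Fin n) : ∑ j, unitv n i j = 1 := by
  unfold unitv
  simp

lemma unitv_injective (n : ℕ) : Function.Injective (unitv n) := by
  intro i i' h
  by_contra hne
  have := congrFun h i
  simp [unitv, hne] at this

lemma prod_pow_unitv (n : ℕ) (i : Fin n) (y : Fin n → ℝ) :
    ∏ j, y j ^ unitv n i j = y i := by
  unfold unitv
  have : ∀ j, y j ^ (if j = i then 1 else 0) = if j = i then y j else 1 := by
    intro j
    split <;> simp
  simp only [this]
  simp

end Stmt8

open Stmt8 in
/-- Stage 1 (quadratization): any solution of a CRN-implementable polynomial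
system is, via a monomial change of variables, a solution of a
CRN-implementable system of degree at most two. -/
theorem stmt_8 (n : ℕ) (hn : 1 ≤ n) (p : Fin n → MvPolynomial (Fin n) ℝ)
    (hp : ∀ i : Fin n, ∃ r s : MvPolynomial (Fin n) ℝ,
      (∀ m, 0 ≤ r.coeff m) ∧ (∀ m, 0 ≤ s.coeff m) ∧ p i = r - X i * s) :
    ∃ (m : ℕ) (_ : n ≤ m) (ι : Fin n → Fin m),
      Function.Injective ι ∧
      ∃ (P : Fin m → MvPolynomial (Fin m) ℝ) (Φ : Fin m → MvPolynomial (Fin n) ℝ),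
        (∀ (y : Fin n → ℝ) (i : Fin n), eval y (Φ (ι i)) = y i) ∧
        (∀ k : Fin m, ∃ R S : MvPolynomial (Fin m) ℝ,
          (∀ d, 0 ≤ R.coeff d) ∧ (∀ d, 0 ≤ S.coeff d) ∧ P k = R - X k * S) ∧
        (∀ k : Fin m, (P k).totalDegree ≤ 2) ∧
        (∀ x : ℝ → (Fin n → ℝ),
          (∀ (t : ℝ) (i : Fin n), HasDerivAt (fun t => x t i) (eval (x t) (p i)) t) →
          ∀ (t : ℝ) (k : Fin m),
            HasDerivAt (fun t => eval (x t) (Φ k))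
              (eval (fun j => eval (x t) (Φ j)) (P k)) t) := by
  classical
  choose r s hr hs hps using hp
  obtain ⟨D, hD, hrD, hsD⟩ : ∃ D : ℕ, 1 ≤ D ∧ (∀ i, (r i).totalDegree ≤ D) ∧
      (∀ i, (s i).totalDegree ≤ D) := by
    refine ⟨1 + Finset.univ.sup (fun i => max (r i).totalDegree (s i).totalDegree),
      Nat.le_add_right 1 _, fun i => ?_, fun i => ?_⟩
    · have h1 : max (r i).totalDegree (s i).totalDegree ≤
          Finset.univ.sup (fun i => max (r i).totalDegree (s i).totalDegree) :=
        Finset.le_sup (f := fun i => max (r i).totalDegree (s i).totalDegree)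
          (Finset.mem_univ i)
      omega
    · have h1 : max (r i).totalDegree (s i).totalDegree ≤
          Finset.univ.sup (fun i => max (r i).totalDegree (s i).totalDegree) :=
        Finset.le_sup (f := fun i => max (r i).totalDegree (s i).totalDegree)
          (Finset.mem_univ i)
      omega
  set ι : Fin n → Fin (M n D) :=
    fun i => eqv n D (mkIdx (unitv n i) (le_of_eq (sum_unitv n i).symm)
      (le_trans (le_of_eq (sum_unitv n i)) hD)) with hι
  have hinj : Function.Injective ι := by
    intro i i' h
    have h1 := (eqv n D).injective h
    exact unitv_injective n (mkIdx_injective h1)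
  refine ⟨M n D, ?_, ι, hinj, Pk n D hD r s hrD hsD, fun k => mon (alpha n D k),
    ?_, ?_, ?_, ?_⟩
  · have := Fintype.card_le_of_injective ι hinj
    simpa using this
  · -- Φ (ι i) evaluates to the coordinate
    intro y i
    have halpha : alpha n D (ι i) = unitv n i := by
      rw [hι]
      unfold alpha
      rw [Equiv.symm_apply_apply, idxFun_mkIdx]
    show eval y (mon (alpha n D (ι i))) = y i
    rw [halpha, eval_mon, prod_pow_unitv]
  · -- CRN structure
    intro k
    exact ⟨liftPoly n D hD (qR n D r k) (totalDegree_qR_le n D r hrD k),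
      liftPoly1 n D (qS n D s k) (totalDegree_qS_le n D s hsD k),
      coeff_liftPoly_nonneg n D hD _ _ (coeff_qR_nonneg n D r hr k),
      coeff_liftPoly1_nonneg n D _ _ (coeff_qS_nonneg n D s hs k), rfl⟩
  · -- degree at most two
    exact totalDegree_Pk_le n D hD r s hrD hsD
  · -- the ODE statement
    intro x hx t k
    simp only [eval_mon]
    rw [eval_Pk n D hD p r s hrD hsD hps k (x t)]
    have hder := HasDerivAt.finset_prod (u := Finset.univ)
      (f := fun i t' => x t' i ^ alpha n D k i)
      (f' := fun i => (alpha n D k i : ℝ) * (x t i) ^ (alpha n D k i - 1) *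
        eval (x t) (p i))
      (x := t) (fun i _ => (hx t i).pow (alpha n D k i))
    simpa [smul_eq_mul, Finset.prod_fn] using hder
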